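/- Induction step for generalized Vandermonde: if for all real exponents β₂ < ... < βₙ (all positive) and 0 < y₂ < ... < yₙ the (n-1)×(n-1) determinant with entries y_j^{β_i} is positive, then for 0 < x₁ < ... < xₙ the (n-1)×(n-1) determinant with entries x_j^{β_i} - x₁^{β_i} (j = 2,...,n) is positive. -/

import Mathlib

open Matrix

/-- Nonvanishing: for strictly increasing positive points `p 0 < p 1 < ... < p n`,
the determinant of differences is nonzero, given the induction hypothesis. -/
lemma gvis_nonvanish (n : ℕ)
    (ih : ∀ (β y : Fin n → ℝ), (∀ i, 0 < β i) → StrictMono β →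
      (∀ j, 0 < y j) → StrictMono y →
      0 < Matrix.det (Matrix.of fun i j : Fin n => (y j) ^ (β i)))
    (β : Fin n → ℝ) (hβpos : ∀ i, 0 < β i) (hβ : StrictMono β)
    (p : Fin (n + 1) → ℝ) (hppos : ∀ j, 0 < p j) (hp : StrictMono p) :
    Matrix.det (Matrix.of fun i j : Fin n => (p j.succ) ^ (β i) - (p 0) ^ (β i)) ≠ 0 := by
  intro h0
  obtain ⟨c, hc, hcM⟩ := Matrix.exists_vecMul_eq_zero_iff.mpr h0
  set f : ℝ → ℝ := fun z => ∑ i, c i * z ^ β i with hf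
  set f' : ℝ → ℝ := fun z => ∑ i, c i * (β i * z ^ (β i - 1)) with hf'
  have hderiv : ∀ z : ℝ, 0 < z → HasDerivAt f (f' z) z := by
    intro z hz
    exact HasDerivAt.fun_sum fun i _ =>
      (Real.hasDerivAt_rpow_const (Or.inl hz.ne')).const_mul (c i)
  have hfp : ∀ j : Fin (n + 1), f (p j) = f (p 0) := by
    intro j
    induction j using Fin.cases with
    | zero => rfl
    | succ k =>
      have h := congrFun hcM k
      simp only [Matrix.vecMul, dotProduct, Matrix.of_apply, Pi.zero_apply] at h
      have h2 : ∑ i, (c i * p k.succ ^ β i - c i * p 0 ^ β i) = 0 := by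
        simpa [mul_sub] using h
      rw [Finset.sum_sub_distrib] at h2
      simp only [hf]
      linarith
  have hroot : ∀ k : Fin n, ∃ y ∈ Set.Ioo (p k.castSucc) (p k.succ), f' y = 0 := by
    intro k
    have hab : p k.castSucc < p k.succ := hp Fin.castSucc_lt_succ
    have hcont : ContinuousOn f (Set.Icc (p k.castSucc) (p k.succ)) := fun z hz =>
      (hderiv z (lt_of_lt_of_le (hppos k.castSucc) hz.1)).continuousAt.continuousWithinAt
    have hfeq : f (p k.castSucc) = f (p k.succ) := by
      rw [hfp k.castSucc, hfp k.succ]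
    exact exists_hasDerivAt_eq_zero hab hcont hfeq
      (fun z hz => hderiv z (lt_trans (hppos k.castSucc) hz.1))
  choose y hy hfy using hroot
  have hypos : ∀ k, 0 < y k := fun k => lt_trans (hppos k.castSucc) (hy k).1
  have hymono : StrictMono y := by
    intro k l hkl
    calc y k < p k.succ := (hy k).2
      _ ≤ p l.castSucc := by
          apply hp.monotone
          simp only [Fin.le_def, Fin.val_succ, Fin.coe_castSucc]
          exact hkl
      _ < y l := (hy l).1
  set d : Fin n → ℝ := fun i => c i * β i with hd
  have hdne : d ≠ 0 := by
    obtain ⟨i, hi⟩ := Function.ne_iff.mp hc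
    refine Function.ne_iff.mpr ⟨i, ?_⟩
    simp only [hd, Pi.zero_apply] at hi ⊢
    exact mul_ne_zero hi (hβpos i).ne'
  have hvec : ∀ j : Fin n, ∑ i, d i * y j ^ β i = 0 := by
    intro j
    have hpow : ∀ i, y j ^ β i = y j ^ (β i - 1) * y j := by
      intro i
      rw [show β i = (β i - 1) + 1 by ring, Real.rpow_add (hypos j),
        Real.rpow_one]
      ring_nf
    have : ∑ i, d i * y j ^ β i = y j * ∑ i, c i * (β i * y j ^ (β i - 1)) := by
      rw [Finset.mul_sum]
      refine Finset.sum_congr rfl fun i _ => ?_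
      rw [hpow i]; simp only [hd]; ring
    have h2 := hfy j
    simp only [hf'] at h2
    rw [this, h2, mul_zero]
  have hdet0 : Matrix.det (Matrix.of fun i j : Fin n => (y j) ^ (β i)) = 0 := by
    refine Matrix.exists_vecMul_eq_zero_iff.mp ⟨d, hdne, ?_⟩
    funext j
    simp only [Matrix.vecMul, dotProduct, Matrix.of_apply, Pi.zero_apply]
    exact hvec j
  exact absurd hdet0 (ih β y hβpos hβ hypos hymono).ne'

theorem generalized_vandermonde_induction_step (n : ℕ)
    (ih : ∀ (β y : Fin n → ℝ), (∀ i, 0 < β i) → StrictMono β →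
      (∀ j, 0 < y j) → StrictMono y →
      0 < Matrix.det (Matrix.of fun i j : Fin n => (y j) ^ (β i)))
    (β : Fin n → ℝ) (hβpos : ∀ i, 0 < β i) (hβ : StrictMono β)
    (x : Fin (n + 1) → ℝ) (hxpos : ∀ j, 0 < x j) (hx : StrictMono x) :
    0 < Matrix.det
      (Matrix.of fun i j : Fin n => (x j.succ) ^ (β i) - (x 0) ^ (β i)) := by
  set D : ℝ → ℝ := fun t =>
    Matrix.det (Matrix.of fun i j : Fin n => (x j.succ) ^ (β i) - t ^ (β i)) with hD
  have hDcont : Continuous D := by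
    apply Continuous.matrix_det
    apply continuous_matrix
    intro i j
    simp only [Matrix.of_apply]
    exact continuous_const.sub (continuous_iff_continuousAt.mpr fun t =>
      Real.continuousAt_rpow_const t (β i) (Or.inr (hβpos i).le))
  have hx0 : (0 : ℝ) < x 0 := hxpos 0
  have hD0 : 0 < D 0 := by
    have h := ih β (fun j => x j.succ) hβpos hβ (fun j => hxpos j.succ)
      (fun a b hab => hx (Fin.succ_lt_succ_iff.mpr hab))
    have heq : D 0 = Matrix.det (Matrix.of fun i j : Fin n => (x j.succ) ^ (β i)) := by
      simp only [hD]
      apply congrArg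
      ext i j
      simp [Real.zero_rpow (hβpos i).ne']
    rw [heq]
    exact h
  have hne : ∀ t : ℝ, 0 < t → t ≤ x 0 → D t ≠ 0 := by
    intro t ht ht'
    set p : Fin (n + 1) → ℝ := Fin.cons t (fun j => x j.succ) with hpdef
    have hppos : ∀ j, 0 < p j := by
      intro j
      induction j using Fin.cases with
      | zero => simpa [hpdef] using ht
      | succ k => simpa [hpdef] using hxpos k.succ
    have hpm : StrictMono p := by
      intro a b hab
      induction b using Fin.cases with
      | zero => exact absurd hab (Fin.not_lt_zero a)
      | succ l =>
        induction a using Fin.cases with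
        | zero =>
          simp only [hpdef, Fin.cons_zero, Fin.cons_succ]
          exact lt_of_le_of_lt ht' (hx (Fin.succ_pos l))
        | succ k =>
          simp only [hpdef, Fin.cons_succ]
          exact hx hab
    have := gvis_nonvanish n ih β hβpos hβ p hppos hpm
    simpa [hD, hpdef] using this
  rcases (hne (x 0) hx0 le_rfl).lt_or_gt with hneg | hposD
  · exfalso
    have hcont : ContinuousOn D (Set.Icc 0 (x 0)) := hDcont.continuousOn
    have hmem : (0 : ℝ) ∈ Set.Icc (D (x 0)) (D 0) := ⟨hneg.le, hD0.le⟩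
    obtain ⟨s, hs, hDs⟩ := intermediate_value_Icc' hx0.le hcont hmem
    have hs0 : s ≠ 0 := by
      intro h; rw [h] at hDs; exact hD0.ne' hDs
    exact hne s (lt_of_le_of_ne hs.1 (Ne.symm hs0)) hs.2 hDs
  · exact hposD
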